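/- For the free group F_k (k ≥ 2) with standard symmetric generating set S = {a₁^±, …, a_k^±} and symmetric weight w : S → (0,∞), the volume entropy h = h(w) satisfies Σ_{i=1}^{k} 1/(1 + e^{w(aᵢ)h}) = 1/2. -/

import Mathlib

variable {G : Type*} [Group G]

/-- The weighted word metric: `dW S w x y` is the infimum of total `w`-weights of words
over `S` representing `y⁻¹ * x`. -/
noncomputable def dW (S : Set G) (w : G → ℝ) (x y : G) : ℝ :=
  sInf {c : ℝ | ∃ l : List G, (∀ s ∈ l, s ∈ S) ∧ l.prod = y⁻¹ * x ∧ c = (l.map w).sum}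

/-- The closed ball of radius `R` about the identity in the weighted word metric. -/
noncomputable def ballW (S : Set G) (w : G → ℝ) (R : ℝ) : Set G :=
  {x : G | dW S w x 1 ≤ R}

/-- The standard symmetric generating set of the free group. -/
def stdGens (k : ℕ) : Set (FreeGroup (Fin k)) :=
  {x | ∃ i : Fin k, x = FreeGroup.of i ∨ x = (FreeGroup.of i)⁻¹}

namespace Stmt4Aux

open FreeGroup

variable {k : ℕ}

/-- weight of a letter -/
def wt (w : FreeGroup (Fin k) → ℝ) (t : Fin k × Bool) : ℝ := w (FreeGroup.of t.1)

/-- weighted length of a word -/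
def Om (w : FreeGroup (Fin k) → ℝ) (L : List (Fin k × Bool)) : ℝ := (L.map (wt w)).sum

@[simp] lemma Om_nil (w : FreeGroup (Fin k) → ℝ) : Om w [] = 0 := rfl

@[simp] lemma Om_cons (w : FreeGroup (Fin k) → ℝ) (t : Fin k × Bool) (L) :
    Om w (t :: L) = wt w t + Om w L := rfl

/-- the group element of a letter -/
def gen (t : Fin k × Bool) : FreeGroup (Fin k) :=
  cond t.2 (FreeGroup.of t.1) (FreeGroup.of t.1)⁻¹

lemma gen_mem (t : Fin k × Bool) : gen t ∈ stdGens k := by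
  rcases t with ⟨i, b⟩
  cases b
  · exact ⟨i, Or.inr rfl⟩
  · exact ⟨i, Or.inl rfl⟩

lemma gen_eq_mk (t : Fin k × Bool) : gen t = mk [t] := by
  rcases t with ⟨i, b⟩
  cases b
  · show (FreeGroup.of i)⁻¹ = _
    rw [FreeGroup.of, FreeGroup.inv_mk]
    rfl
  · rfl

lemma prod_map_gen (L : List (Fin k × Bool)) : (L.map gen).prod = mk L := by
  induction L with
  | nil => simp [FreeGroup.one_eq_mk]
  | cons t L ih =>
    rw [List.map_cons, List.prod_cons, ih, gen_eq_mk, FreeGroup.mul_mk]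
    rfl

lemma w_gen (w : FreeGroup (Fin k) → ℝ)
    (hwsym : ∀ i : Fin k, w (FreeGroup.of i)⁻¹ = w (FreeGroup.of i)) (t : Fin k × Bool) :
    w (gen t) = wt w t := by
  rcases t with ⟨i, b⟩; cases b
  · exact hwsym i
  · rfl

lemma wt_pos (w : FreeGroup (Fin k) → ℝ) (hwpos : ∀ s ∈ stdGens k, 0 < w s)
    (t : Fin k × Bool) : 0 < wt w t :=
  hwpos _ ⟨t.1, Or.inl rfl⟩

/-- any generator word comes from a letter list -/
lemma exists_letters (w : FreeGroup (Fin k) → ℝ)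
    (hwsym : ∀ i : Fin k, w (FreeGroup.of i)⁻¹ = w (FreeGroup.of i))
    (l : List (FreeGroup (Fin k))) (hl : ∀ s ∈ l, s ∈ stdGens k) :
    ∃ L : List (Fin k × Bool), l.prod = mk L ∧ (l.map w).sum = Om w L := by
  induction l with
  | nil => exact ⟨[], by simp [FreeGroup.one_eq_mk], by simp⟩
  | cons s l ih =>
    obtain ⟨L, hL1, hL2⟩ := ih (fun a ha => hl a (List.mem_cons_of_mem _ ha))
    obtain ⟨i, hi⟩ := hl s List.mem_cons_self
    rcases hi with h | h
    · refine ⟨(i, true) :: L, ?_, ?_⟩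
      · rw [List.prod_cons, hL1, h]
        rw [show FreeGroup.of i = mk [(i, true)] from rfl, FreeGroup.mul_mk]; rfl
      · simp [hL2, h, Om, wt]
    · refine ⟨(i, false) :: L, ?_, ?_⟩
      · rw [List.prod_cons, hL1, h, show (FreeGroup.of i)⁻¹ = mk [(i, false)] from
          (gen_eq_mk (⟨i, false⟩ : Fin k × Bool))]
        rw [FreeGroup.mul_mk]; rfl
      · simp [hL2, h, Om, wt, hwsym i]

lemma sublist_sum_le (w : FreeGroup (Fin k) → ℝ) (hwpos : ∀ s ∈ stdGens k, 0 < w s)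
    {L₁ L₂ : List (Fin k × Bool)} (h : List.Sublist L₁ L₂) : Om w L₁ ≤ Om w L₂ := by
  induction h with
  | slnil => exact le_refl _
  | cons a h ih => simpa using le_add_of_nonneg_of_le (le_of_lt (wt_pos w hwpos a)) ih
  | cons_cons a h ih => simpa using ih

lemma dW_eq (w : FreeGroup (Fin k) → ℝ) (hwpos : ∀ s ∈ stdGens k, 0 < w s)
    (hwsym : ∀ i : Fin k, w (FreeGroup.of i)⁻¹ = w (FreeGroup.of i))
    (x : FreeGroup (Fin k)) :
    dW (stdGens k) w x 1 = Om w x.toWord := by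
  have hmem : Om w x.toWord ∈
      {c : ℝ | ∃ l : List (FreeGroup (Fin k)), (∀ s ∈ l, s ∈ stdGens k) ∧
        l.prod = (1 : FreeGroup (Fin k))⁻¹ * x ∧ c = (l.map w).sum} := by
    refine ⟨x.toWord.map gen, fun s hs => ?_, ?_, ?_⟩
    · obtain ⟨t, _, rfl⟩ := List.mem_map.1 hs; exact gen_mem t
    · rw [prod_map_gen, mk_toWord, inv_one, one_mul]
    · rw [List.map_map, Om]
      congr 1
      exact (List.map_congr_left fun t _ => (w_gen w hwsym t)).symm
  have hlb : ∀ c ∈ {c : ℝ | ∃ l : List (FreeGroup (Fin k)), (∀ s ∈ l, s ∈ stdGens k) ∧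
        l.prod = (1 : FreeGroup (Fin k))⁻¹ * x ∧ c = (l.map w).sum}, Om w x.toWord ≤ c := by
    rintro c ⟨l, hl, hprod, rfl⟩
    obtain ⟨L, hL1, hL2⟩ := exists_letters w hwsym l hl
    rw [inv_one, one_mul] at hprod
    rw [hL2]
    have hx : x.toWord = reduce L := by rw [← hprod, hL1, toWord_mk]
    rw [hx]
    exact sublist_sum_le w hwpos (Red.sublist reduce.red)
  exact le_antisymm (csInf_le ⟨Om w x.toWord, hlb⟩ hmem) (le_csInf ⟨_, hmem⟩ hlb)



/-- all lists of given length -/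
def lsts (k : ℕ) : ℕ → Finset (List (Fin k × Bool))
  | 0 => {[]}
  | n + 1 => (Finset.univ ×ˢ lsts k n).image fun p => p.1 :: p.2

lemma mem_lsts : ∀ {n : ℕ} {L : List (Fin k × Bool)}, L ∈ lsts k n ↔ L.length = n
  | 0, L => by simp [lsts, List.length_eq_zero_iff]
  | n + 1, L => by
    simp only [lsts, Finset.mem_image, Finset.mem_product, Finset.mem_univ, true_and]
    constructor
    · rintro ⟨⟨a, M⟩, hM, rfl⟩
      simp [mem_lsts.1 hM]
    · intro hL
      cases L with
      | nil => simp at hL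
      | cons a M => exact ⟨⟨a, M⟩, mem_lsts.2 (by simpa using hL), rfl⟩

/-- reduced words of length n -/
def RW (k : ℕ) (n : ℕ) : Finset (List (Fin k × Bool)) :=
  (lsts k n).filter fun L => reduce L = L

lemma mem_RW {n : ℕ} {L : List (Fin k × Bool)} :
    L ∈ RW k n ↔ L.length = n ∧ reduce L = L := by
  simp [RW, mem_lsts]

lemma length_lt_of_reduce_ne {L : List (Fin k × Bool)} (h : reduce L ≠ L) :
    (reduce L).length < L.length :=
  lt_of_le_of_ne (List.Sublist.length_le (Red.sublist reduce.red))
    (fun he => h (List.Sublist.eq_of_length (Red.sublist reduce.red) he))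

lemma reduce_cons_iff {a : Fin k × Bool} {L : List (Fin k × Bool)} :
    reduce (a :: L) = a :: L ↔
      reduce L = L ∧ ∀ b ∈ L.head?, ¬(a.1 = b.1 ∧ a.2 = !b.2) := by
  constructor
  · intro h
    have hred : reduce L = L := by
      by_contra hne
      have h1 : (reduce (a :: L)).length ≤ (reduce L).length + 1 := by
        rw [reduce.cons]
        cases hr : reduce L with
        | nil => simp
        | cons hd tl =>
          by_cases hc : a.1 = hd.1 ∧ a.2 = !hd.2 <;> simp [hc, hr] <;> omega
      rw [h] at h1
      have := length_lt_of_reduce_ne hne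
      simp at h1
      omega
    refine ⟨hred, ?_⟩
    intro b hb hc
    cases L with
    | nil => simp at hb
    | cons b' M =>
      simp at hb; subst hb
      rw [reduce.cons, hred] at h
      simp only [hc, and_self, if_true] at h
      have := congrArg List.length h
      simp at this
      omega
  · rintro ⟨hred, hhead⟩
    rw [reduce.cons, hred]
    cases L with
    | nil => rfl
    | cons b M =>
      have : ¬(a.1 = b.1 ∧ a.2 = !b.2) := hhead b rfl
      simp [this]

/-- the inverse letter -/
def invL (t : Fin k × Bool) : Fin k × Bool := (t.1, !t.2)

lemma head_cond_iff {a : Fin k × Bool} {L : List (Fin k × Bool)} :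
    (∀ b ∈ L.head?, ¬(a.1 = b.1 ∧ a.2 = !b.2)) ↔ L.head? ≠ some (invL a) := by
  cases L with
  | nil => simp
  | cons b M =>
    rcases a with ⟨i, c⟩; rcases b with ⟨j, d⟩
    simp only [List.head?_cons, Option.mem_some_iff, ne_eq, Option.some.injEq, invL]
    constructor
    · intro h he
      refine h (j, d) rfl ?_
      rw [Prod.ext_iff] at he
      simp only at he
      exact ⟨he.1.symm, by simp [he.2]⟩
    · rintro h b' rfl hc
      simp only at hc
      exact h (by rw [Prod.ext_iff]; exact ⟨hc.1.symm, by simp [hc.2]⟩)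

lemma RW_succ_filter (n : ℕ) (t : Fin k × Bool) :
    (RW k (n + 1)).filter (fun L => L.head? = some t) =
      ((RW k n).filter (fun L => L.head? ≠ some (invL t))).image (t :: ·) := by
  ext M
  simp only [Finset.mem_filter, Finset.mem_image, mem_RW]
  constructor
  · rintro ⟨⟨hlen, hred⟩, hhead⟩
    cases M with
    | nil => simp at hhead
    | cons a L =>
      simp only [List.head?_cons, Option.some.injEq] at hhead
      subst hhead
      obtain ⟨h1, h2⟩ := reduce_cons_iff.1 hred
      exact ⟨L, ⟨⟨by simpa using hlen, h1⟩, head_cond_iff.1 h2⟩, rfl⟩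
  · rintro ⟨L, ⟨⟨hlen, hred⟩, hhead⟩, rfl⟩
    refine ⟨⟨by simpa using hlen, reduce_cons_iff.2 ⟨hred, head_cond_iff.2 hhead⟩⟩, rfl⟩




noncomputable def phi (w : FreeGroup (Fin k) → ℝ) (hs : ℝ) (L : List (Fin k × Bool)) : ℝ :=
  Real.exp (-(hs * Om w L))

noncomputable def T (w : FreeGroup (Fin k) → ℝ) (hs : ℝ) (n : ℕ) (t : Fin k × Bool) : ℝ :=
  ∑ L ∈ (RW k n).filter (fun L => L.head? = some t), phi w hs L

noncomputable def A (w : FreeGroup (Fin k) → ℝ) (hs : ℝ) (n : ℕ) : ℝ :=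
  ∑ L ∈ RW k n, phi w hs L

noncomputable def xx (w : FreeGroup (Fin k) → ℝ) (hs : ℝ) (t : Fin k × Bool) : ℝ :=
  1 / (1 + Real.exp (wt w t * hs))

section

variable (w : FreeGroup (Fin k) → ℝ) (hs : ℝ)

lemma xx_pos (t : Fin k × Bool) : 0 < xx w hs t := by
  have := Real.exp_pos (wt w t * hs)
  unfold xx; positivity

lemma xx_lt_half (hwt : ∀ t : Fin k × Bool, 0 < wt w t) (hhs : 0 < hs)
    (t : Fin k × Bool) : xx w hs t < 1 / 2 := by
  have h1 : (1 : ℝ) < Real.exp (wt w t * hs) := by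
    have := Real.add_one_le_exp (wt w t * hs)
    nlinarith [mul_pos (hwt t) hhs]
  rw [xx, div_lt_div_iff₀ (by linarith) (by norm_num)]
  linarith

lemma xx_invL (t : Fin k × Bool) : xx w hs (invL t) = xx w hs t := rfl

lemma exp_neg_wt (t : Fin k × Bool) :
    Real.exp (-(hs * wt w t)) = xx w hs t / (1 - xx w hs t) := by
  have hE : (0:ℝ) < Real.exp (wt w t * hs) := Real.exp_pos _
  have h1 : (0:ℝ) < 1 + Real.exp (wt w t * hs) := by linarith
  have hx : xx w hs t = 1 / (1 + Real.exp (wt w t * hs)) := rfl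
  rw [mul_comm, Real.exp_neg, hx]
  have hEne := ne_of_gt hE
  have h1ne := ne_of_gt h1
  rw [show (1:ℝ) - 1 / (1 + Real.exp (wt w t * hs))
      = Real.exp (wt w t * hs) / (1 + Real.exp (wt w t * hs)) from by
        rw [eq_div_iff h1ne]; field_simp; ring,
    div_div_div_cancel_right₀ h1ne, one_div]

lemma RW_zero : RW k 0 = {([] : List (Fin k × Bool))} := by
  ext L; simp [mem_RW, List.length_eq_zero_iff]
  rintro rfl; rfl

lemma A_zero : A w hs 0 = 1 := by
  simp [A, RW_zero, phi]

lemma T_zero (t : Fin k × Bool) : T w hs 0 t = 0 := by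
  rw [T, RW_zero]
  rw [Finset.sum_eq_zero]
  intro L hL
  simp at hL
  exact absurd hL.2 (by simp [hL.1])

lemma T_succ (n : ℕ) (t : Fin k × Bool) :
    T w hs (n + 1) t = Real.exp (-(hs * wt w t)) * (A w hs n - T w hs n (invL t)) := by
  rw [T, RW_succ_filter, Finset.sum_image (by intro a _ b _ h; simpa using h)]
  have : ∀ L, phi w hs (t :: L) = Real.exp (-(hs * wt w t)) * phi w hs L := by
    intro L
    rw [phi, phi, Om_cons, ← Real.exp_add]
    ring_nf
  rw [Finset.sum_congr rfl fun L _ => this L, ← Finset.mul_sum]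
  congr 1
  have hsplit := Finset.sum_filter_add_sum_filter_not (RW k n)
    (fun L => L.head? = some (invL t)) (phi w hs)
  have : T w hs n (invL t) = ∑ L ∈ (RW k n).filter (fun L => L.head? = some (invL t)),
      phi w hs L := rfl
  rw [A, ← hsplit] at *
  rw [this]; ring

lemma A_succ_eq_sum (n : ℕ) : A w hs (n + 1) = ∑ t : Fin k × Bool, T w hs (n + 1) t := by
  classical
  have h := Finset.sum_fiberwise_of_maps_to
    (g := fun L : List (Fin k × Bool) => L.head?) (s := RW k (n+1))
    (t := (Finset.univ : Finset (Option (Fin k × Bool))))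
    (fun L _ => Finset.mem_univ _) (phi w hs)
  rw [A, ← h, Fintype.sum_option]
  have hnone : (RW k (n+1)).filter (fun L => L.head? = none) = ∅ := by
    ext L
    simp only [Finset.mem_filter, mem_RW, Finset.notMem_empty, iff_false]
    rintro ⟨⟨hlen, _⟩, hnone⟩
    cases L with
    | nil => simp at hlen
    | cons a M => simp at hnone
  rw [hnone]
  simp [T]

lemma T_bounds (hwt : ∀ t : Fin k × Bool, 0 < wt w t) (hhs : 0 < hs) (hroot : ∑ t : Fin k × Bool, xx w hs t = 1) :
    ∀ n, ∀ t, xx w hs t ≤ T w hs (n + 1) t ∧ T w hs (n + 1) t ≤ 2 * xx w hs t := by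
  have hx0 := xx_pos w hs
  have hxh := xx_lt_half w hs hwt hhs
  have hfrac : ∀ t, Real.exp (-(hs * wt w t)) = xx w hs t / (1 - xx w hs t) :=
    exp_neg_wt w hs
  have h1x : ∀ t : Fin k × Bool, 0 < 1 - xx w hs t := fun t => by
    have := hxh t; linarith
  have herase : ∀ t : Fin k × Bool,
      ∑ s ∈ Finset.univ.erase (invL t), xx w hs s = 1 - xx w hs t := by
    intro t
    have := Finset.sum_erase_add Finset.univ (xx w hs) (Finset.mem_univ (invL t))
    rw [hroot] at this
    rw [xx_invL] at this
    linarith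
  intro n
  induction n with
  | zero =>
    intro t
    rw [T_succ, A_zero, T_zero, sub_zero, mul_one, hfrac]
    constructor
    · rw [le_div_iff₀ (h1x t)]
      nlinarith [hx0 t]
    · rw [div_le_iff₀ (h1x t)]
      nlinarith [hx0 t, hxh t]
  | succ n ih =>
    intro t
    have hAT : A w hs (n + 1) - T w hs (n + 1) (invL t)
        = ∑ s ∈ Finset.univ.erase (invL t), T w hs (n + 1) s := by
      rw [A_succ_eq_sum]
      have := Finset.sum_erase_add Finset.univ (T w hs (n+1)) (Finset.mem_univ (invL t))
      linarith
    have hlo : 1 - xx w hs t ≤ ∑ s ∈ Finset.univ.erase (invL t), T w hs (n + 1) s := by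
      rw [← herase t]
      exact Finset.sum_le_sum fun s _ => (ih s).1
    have hhi : ∑ s ∈ Finset.univ.erase (invL t), T w hs (n + 1) s
        ≤ 2 * (1 - xx w hs t) := by
      rw [← herase t, Finset.mul_sum]
      exact Finset.sum_le_sum fun s _ => (ih s).2
    rw [T_succ, hAT, hfrac]
    have hfr : 0 < xx w hs t / (1 - xx w hs t) := div_pos (hx0 t) (h1x t)
    constructor
    · calc xx w hs t = xx w hs t / (1 - xx w hs t) * (1 - xx w hs t) := by
            rw [div_mul_cancel₀ _ (ne_of_gt (h1x t))]
        _ ≤ _ := by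
            exact mul_le_mul_of_nonneg_left hlo (le_of_lt hfr)
    · calc xx w hs t / (1 - xx w hs t) * ∑ s ∈ Finset.univ.erase (invL t), T w hs (n+1) s
          ≤ xx w hs t / (1 - xx w hs t) * (2 * (1 - xx w hs t)) :=
            mul_le_mul_of_nonneg_left hhi (le_of_lt hfr)
        _ = 2 * xx w hs t := by
            have hne : (1 - xx w hs t) ≠ 0 := ne_of_gt (h1x t)
            field_simp

lemma A_bounds (hwt : ∀ t : Fin k × Bool, 0 < wt w t) (hhs : 0 < hs) (hroot : ∑ t : Fin k × Bool, xx w hs t = 1) (n : ℕ) :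
    1 ≤ A w hs (n + 1) ∧ A w hs (n + 1) ≤ 2 := by
  have hT := T_bounds w hs hwt hhs hroot n
  rw [A_succ_eq_sum]
  constructor
  · calc (1:ℝ) = ∑ t : Fin k × Bool, xx w hs t := hroot.symm
      _ ≤ _ := Finset.sum_le_sum fun t _ => (hT t).1
  · calc ∑ t : Fin k × Bool, T w hs (n+1) t ≤ ∑ t : Fin k × Bool, 2 * xx w hs t :=
        Finset.sum_le_sum fun t _ => (hT t).2
      _ = 2 := by rw [← Finset.mul_sum, hroot, mul_one]

end


lemma Om_ge (w : FreeGroup (Fin k) → ℝ) {wmn : ℝ} (hmn : ∀ t, wmn ≤ wt w t)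
    (L : List (Fin k × Bool)) : wmn * L.length ≤ Om w L := by
  induction L with
  | nil => simp
  | cons t L ih =>
    rw [Om_cons, List.length_cons]
    push_cast
    calc wmn * (L.length + 1) = wmn + wmn * L.length := by ring
      _ ≤ wt w t + Om w L := add_le_add (hmn t) ih

lemma Om_le (w : FreeGroup (Fin k) → ℝ) {wmx : ℝ} (hmx : ∀ t, wt w t ≤ wmx)
    (L : List (Fin k × Bool)) : Om w L ≤ wmx * L.length := by
  induction L with
  | nil => simp
  | cons t L ih =>
    rw [Om_cons, List.length_cons]
    push_cast
    calc wt w t + Om w L ≤ wmx + wmx * L.length := add_le_add (hmx t) ih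
      _ = wmx * (L.length + 1) := by ring

lemma Om_nonneg (w : FreeGroup (Fin k) → ℝ) (hwpos : ∀ s ∈ stdGens k, 0 < w s)
    (L : List (Fin k × Bool)) : 0 ≤ Om w L := by
  have h := Om_ge w (wmn := 0) (fun t => le_of_lt (wt_pos w hwpos t)) L
  simpa using h

/-- the finite ball as a `Finset` of reduced words -/
noncomputable def BF (w : FreeGroup (Fin k) → ℝ) (wmn R : ℝ) : Finset (List (Fin k × Bool)) :=
  (Finset.range (⌊R / wmn⌋₊ + 1)).biUnion fun n => (RW k n).filter fun L => Om w L ≤ R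

lemma mem_BF {w : FreeGroup (Fin k) → ℝ} {wmn R : ℝ} (hwmn : 0 < wmn)
    (hmn : ∀ t, wmn ≤ wt w t) {L : List (Fin k × Bool)} :
    L ∈ BF w wmn R ↔ reduce L = L ∧ Om w L ≤ R := by
  simp only [BF, Finset.mem_biUnion, Finset.mem_range, Finset.mem_filter, mem_RW]
  constructor
  · rintro ⟨n, _, ⟨_, hred⟩, hOm⟩; exact ⟨hred, hOm⟩
  · rintro ⟨hred, hOm⟩
    refine ⟨L.length, ?_, ⟨rfl, hred⟩, hOm⟩
    have h1 : wmn * L.length ≤ Om w L := Om_ge w hmn L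
    have h2 : (L.length : ℝ) ≤ R / wmn := by
      rw [le_div_iff₀ hwmn]; linarith [mul_comm wmn (L.length : ℝ)]
    exact Nat.lt_succ_of_le (Nat.le_floor h2)

lemma ball_ncard (w : FreeGroup (Fin k) → ℝ) (hwpos : ∀ s ∈ stdGens k, 0 < w s)
    (hwsym : ∀ i : Fin k, w (FreeGroup.of i)⁻¹ = w (FreeGroup.of i))
    {wmn : ℝ} (hwmn : 0 < wmn) (hmn : ∀ t, wmn ≤ wt w t) (R : ℝ) :
    (ballW (stdGens k) w R).ncard = (BF w wmn R).card := by
  have heq : ballW (stdGens k) w R = FreeGroup.mk '' ((BF w wmn R : Set (List (Fin k × Bool)))) := by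
    ext x
    simp only [ballW, Set.mem_setOf_eq, dW_eq w hwpos hwsym, Set.mem_image, Finset.mem_coe,
      mem_BF hwmn hmn]
    constructor
    · intro hx
      exact ⟨x.toWord, ⟨reduce_toWord x, hx⟩, mk_toWord⟩
    · rintro ⟨L, ⟨hred, hOm⟩, rfl⟩
      show Om w (toWord (mk L)) ≤ R
      rw [toWord_mk, hred]
      exact hOm
  rw [heq, Set.ncard_image_of_injOn, Set.ncard_coe_finset]
  intro L1 h1 L2 h2 he
  have hr := reduce.sound he
  rw [((mem_BF hwmn hmn).1 (Finset.mem_coe.1 h1)).1,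
    ((mem_BF hwmn hmn).1 (Finset.mem_coe.1 h2)).1] at hr
  exact hr

lemma BF_card_pos (w : FreeGroup (Fin k) → ℝ) {wmn R : ℝ} (hwmn : 0 < wmn)
    (hmn : ∀ t, wmn ≤ wt w t) (hR : 0 ≤ R) : 0 < (BF w wmn R).card := by
  refine Finset.card_pos.2 ⟨[], ?_⟩
  rw [mem_BF hwmn hmn]
  exact ⟨rfl, by simpa using hR⟩

/-- upper bound on the ball cardinality -/
lemma BF_card_le (w : FreeGroup (Fin k) → ℝ) (hs : ℝ)
    (hwt : ∀ t : Fin k × Bool, 0 < wt w t) (hhs : 0 < hs)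
    (hroot : ∑ t : Fin k × Bool, xx w hs t = 1)
    {wmn R : ℝ} (hwmn : 0 < wmn) (hR : 0 ≤ R) :
    ((BF w wmn R).card : ℝ) ≤ ((⌊R / wmn⌋₊ : ℝ) + 1) * (2 * Real.exp (hs * R)) := by
  have hdisj : ∀ n₁ ∈ Finset.range (⌊R / wmn⌋₊ + 1), ∀ n₂ ∈ Finset.range (⌊R / wmn⌋₊ + 1),
      n₁ ≠ n₂ → Disjoint ((RW k n₁).filter fun L => Om w L ≤ R)
        ((RW k n₂).filter fun L => Om w L ≤ R) := by
    intro n₁ _ n₂ _ hne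
    refine Finset.disjoint_left.2 fun L hL1 hL2 => ?_
    have e1 := (mem_RW.1 (Finset.mem_filter.1 hL1).1).1
    have e2 := (mem_RW.1 (Finset.mem_filter.1 hL2).1).1
    exact hne (e1 ▸ e2 ▸ rfl)
  rw [BF, Finset.card_biUnion hdisj]
  push_cast
  have hterm : ∀ n, (((RW k n).filter fun L => Om w L ≤ R).card : ℝ)
      ≤ 2 * Real.exp (hs * R) := by
    intro n
    have hA : A w hs n ≤ 2 := by
      cases n with
      | zero => rw [A_zero]; norm_num
      | succ m => exact (A_bounds w hs hwt hhs hroot m).2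
    have step1 : (((RW k n).filter fun L => Om w L ≤ R).card : ℝ)
        ≤ ∑ L ∈ (RW k n).filter (fun L => Om w L ≤ R), Real.exp (hs * R) * phi w hs L := by
      rw [Finset.card_eq_sum_ones]
      push_cast
      refine Finset.sum_le_sum fun L hL => ?_
      have hOm : Om w L ≤ R := (Finset.mem_filter.1 hL).2
      rw [phi, ← Real.exp_add]
      have : (0:ℝ) ≤ hs * R + -(hs * Om w L) := by nlinarith
      calc (1:ℝ) = Real.exp 0 := Real.exp_zero.symm
        _ ≤ _ := Real.exp_le_exp.2 this
    have step2 : ∑ L ∈ (RW k n).filter (fun L => Om w L ≤ R), Real.exp (hs * R) * phi w hs L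
        ≤ Real.exp (hs * R) * A w hs n := by
      rw [← Finset.mul_sum]
      refine mul_le_mul_of_nonneg_left ?_ (le_of_lt (Real.exp_pos _))
      exact Finset.sum_le_sum_of_subset_of_nonneg (Finset.filter_subset _ _)
        (fun L _ _ => le_of_lt (Real.exp_pos _))
    calc (((RW k n).filter fun L => Om w L ≤ R).card : ℝ) ≤ _ := step1
      _ ≤ Real.exp (hs * R) * A w hs n := step2
      _ ≤ 2 * Real.exp (hs * R) := by nlinarith [Real.exp_pos (hs * R)]
  calc ∑ n ∈ Finset.range (⌊R / wmn⌋₊ + 1), (((RW k n).filter fun L => Om w L ≤ R).card : ℝ)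
      ≤ ∑ _n ∈ Finset.range (⌊R / wmn⌋₊ + 1), 2 * Real.exp (hs * R) :=
        Finset.sum_le_sum fun n _ => hterm n
    _ = ((⌊R / wmn⌋₊ : ℝ) + 1) * (2 * Real.exp (hs * R)) := by
        rw [Finset.sum_const, Finset.card_range]
        push_cast; ring



lemma BF_lower (w : FreeGroup (Fin k) → ℝ) (hs : ℝ) (hk : 0 < k)
    (hwt : ∀ t : Fin k × Bool, 0 < wt w t) (hhs : 0 < hs)
    (hroot : ∑ t : Fin k × Bool, xx w hs t = 1)
    {wmn wmx : ℝ} (hwmn : 0 < wmn) (hmn : ∀ t, wmn ≤ wt w t) (hmx : ∀ t, wt w t ≤ wmx)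
    (n : ℕ) :
    ∃ j : ℤ, (((n : ℝ) + 1) * wmn ≤ (j : ℝ)) ∧ ((j : ℝ) ≤ ((n : ℝ) + 1) * wmx + 1) ∧
      Real.exp (hs * ((j : ℝ) - 1)) / (((n : ℝ) + 1) * wmx + 1)
        ≤ ((BF w wmn ((j : ℝ))).card : ℝ) := by
  set N := n + 1 with hN
  have hNr : ((N:ℕ) : ℝ) = (n : ℝ) + 1 := by push_cast [hN]; ring
  have hNpos : (0:ℝ) < ((N:ℕ):ℝ) := by rw [hNr]; positivity
  have hwmx : 0 < wmx := lt_of_lt_of_le hwmn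
    (le_trans (hmn ⟨⟨0, hk⟩, true⟩) (hmx ⟨⟨0, hk⟩, true⟩))
  set m := ⌈wmx * ((N:ℕ):ℝ)⌉ with hm
  have hm1 : 1 ≤ m := Int.ceil_pos.2 (by positivity)
  set J := Finset.Icc (1:ℤ) m with hJ
  have hJcardN : J.card = m.toNat := by rw [hJ, Int.card_Icc]; congr 1; ring
  have hJcard : (J.card : ℝ) = (m : ℝ) := by
    rw [hJcardN]
    exact_mod_cast congrArg (Int.cast : ℤ → ℝ) (Int.toNat_of_nonneg (by omega))
  have hmr : (0:ℝ) < (m:ℝ) := by exact_mod_cast hm1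
  have hmaps : ∀ L ∈ RW k N, ⌈Om w L⌉ ∈ J := by
    intro L hL
    obtain ⟨hlen, hred⟩ := mem_RW.1 hL
    have h1 : wmn * ((N:ℕ):ℝ) ≤ Om w L := by
      have := Om_ge w hmn L; rwa [hlen] at this
    have hpos : 0 < Om w L := lt_of_lt_of_le (by positivity) h1
    have h2 : Om w L ≤ wmx * ((N:ℕ):ℝ) := by
      have := Om_le w hmx L; rwa [hlen] at this
    rw [hJ, Finset.mem_Icc]
    exact ⟨Int.ceil_pos.2 hpos, Int.ceil_le.2 (le_trans h2 (Int.le_ceil _))⟩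
  have hsum := Finset.sum_fiberwise_of_maps_to hmaps (phi w hs)
  have hA1 : 1 ≤ A w hs N := (A_bounds w hs hwt hhs hroot n).1
  have hex : ∃ j ∈ J, A w hs N / (J.card : ℝ)
      ≤ ∑ L ∈ (RW k N).filter (fun L => ⌈Om w L⌉ = j), phi w hs L := by
    apply Finset.exists_le_of_sum_le ⟨1, Finset.mem_Icc.2 ⟨le_refl 1, hm1⟩⟩
    rw [Finset.sum_const, hsum, nsmul_eq_mul, hJcard, mul_div_cancel₀ _ (ne_of_gt hmr)]
    exact le_of_eq rfl
  obtain ⟨j, hjJ, hSj⟩ := hex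
  set S := ∑ L ∈ (RW k N).filter (fun L => ⌈Om w L⌉ = j), phi w hs L with hSdef
  have hS_lb : 1 / (m:ℝ) ≤ S := by
    rw [hJcard] at hSj
    refine le_trans ?_ hSj
    gcongr
  have hSpos : 0 < S := lt_of_lt_of_le (by positivity) hS_lb
  have hnonempty : ((RW k N).filter (fun L => ⌈Om w L⌉ = j)).Nonempty := by
    by_contra hcon
    rw [Finset.not_nonempty_iff_eq_empty] at hcon
    rw [hSdef, hcon, Finset.sum_empty] at hSpos
    exact lt_irrefl 0 hSpos
  obtain ⟨L0, hL0⟩ := hnonempty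
  obtain ⟨hL0RW, hL0j⟩ := Finset.mem_filter.1 hL0
  refine ⟨j, ?_, ?_, ?_⟩
  · -- N * wmn ≤ j
    have h1 : wmn * ((N:ℕ):ℝ) ≤ Om w L0 := by
      have := Om_ge w hmn L0; rwa [(mem_RW.1 hL0RW).1] at this
    have h2 : Om w L0 ≤ (j:ℝ) := by rw [← hL0j]; exact Int.le_ceil _
    rw [← hNr]; linarith [mul_comm wmn ((N:ℕ):ℝ)]
  · -- j ≤ N * wmx + 1
    have hjm : j ≤ m := (Finset.mem_Icc.1 hjJ).2
    have : (m:ℝ) < wmx * ((N:ℕ):ℝ) + 1 := Int.ceil_lt_add_one _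
    have hjr : (j:ℝ) ≤ (m:ℝ) := by exact_mod_cast hjm
    rw [← hNr]; linarith [mul_comm wmx ((N:ℕ):ℝ)]
  · -- the cardinality bound
    have hbound : ∀ L ∈ (RW k N).filter (fun L => ⌈Om w L⌉ = j),
        phi w hs L ≤ Real.exp (-(hs * ((j:ℝ) - 1))) := by
      intro L hL
      obtain ⟨hLRW, hLj⟩ := Finset.mem_filter.1 hL
      have h1 : (j:ℝ) - 1 < Om w L := (Int.ceil_eq_iff.1 hLj).1
      rw [phi, Real.exp_le_exp]
      nlinarith
    have hcard := Finset.sum_le_card_nsmul _ _ _ hbound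
    rw [nsmul_eq_mul] at hcard
    -- S ≤ card * exp(-(hs*(j-1)))
    have hsub : (RW k N).filter (fun L => ⌈Om w L⌉ = j) ⊆ BF w wmn ((j:ℝ)) := by
      intro L hL
      obtain ⟨hLRW, hLj⟩ := Finset.mem_filter.1 hL
      rw [mem_BF hwmn hmn]
      refine ⟨(mem_RW.1 hLRW).2, ?_⟩
      rw [← hLj]
      exact Int.le_ceil _
    have hcard2 : (((RW k N).filter (fun L => ⌈Om w L⌉ = j)).card : ℝ)
        ≤ ((BF w wmn ((j:ℝ))).card : ℝ) := by
      exact_mod_cast Finset.card_le_card hsub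
    have hexp : (0:ℝ) < Real.exp (-(hs * ((j:ℝ) - 1))) := Real.exp_pos _
    have hkey : Real.exp (hs * ((j:ℝ) - 1)) / (m:ℝ)
        ≤ (((RW k N).filter (fun L => ⌈Om w L⌉ = j)).card : ℝ) := by
      have h4 := le_trans hS_lb hcard
      have h5 := mul_le_mul_of_nonneg_right h4 (le_of_lt (Real.exp_pos (hs * ((j:ℝ) - 1))))
      rw [mul_assoc, ← Real.exp_add, neg_add_cancel, Real.exp_zero, mul_one, one_div,
        inv_mul_eq_div] at h5
      exact h5
    have hmN : (m:ℝ) ≤ ((n:ℝ) + 1) * wmx + 1 := by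
      have : (m:ℝ) < wmx * ((N:ℕ):ℝ) + 1 := Int.ceil_lt_add_one _
      rw [hNr] at this; linarith [mul_comm wmx ((n:ℝ)+1)]
    calc Real.exp (hs * ((j:ℝ) - 1)) / (((n:ℝ) + 1) * wmx + 1)
        ≤ Real.exp (hs * ((j:ℝ) - 1)) / (m:ℝ) := by
          gcongr
      _ ≤ _ := le_trans hkey hcard2

end Stmt4Aux

namespace Stmt4Aux
open FreeGroup Filter

lemma exists_root (k : ℕ) (hk : 2 ≤ k) (w : FreeGroup (Fin k) → ℝ)
    (hwpos : ∀ s ∈ stdGens k, 0 < w s) :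
    ∃ hs : ℝ, 0 < hs ∧ ∑ i : Fin k, 1 / (1 + Real.exp (w (FreeGroup.of i) * hs)) = 1 / 2 := by
  have hk0 : 0 < k := by omega
  have hne : (Finset.univ : Finset (Fin k)).Nonempty := ⟨⟨0, hk0⟩, Finset.mem_univ _⟩
  set wmn := Finset.univ.inf' hne (fun i => w (FreeGroup.of i)) with hwmndef
  have hwmnpos : 0 < wmn := by
    rw [hwmndef, Finset.lt_inf'_iff]
    exact fun i _ => hwpos _ ⟨i, Or.inl rfl⟩
  have hwmnle : ∀ i : Fin k, wmn ≤ w (FreeGroup.of i) := fun i =>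
    Finset.inf'_le _ (Finset.mem_univ i)
  set g : ℝ → ℝ := fun s => ∑ i : Fin k, 1 / (1 + Real.exp (w (FreeGroup.of i) * s)) with hg
  have hcont : Continuous g := by
    apply continuous_finset_sum
    intro i _
    exact continuous_const.div
      (continuous_const.add (Real.continuous_exp.comp (continuous_const.mul continuous_id)))
      (fun x => by positivity)
  have hg0 : g 0 = k / 2 := by
    rw [hg]
    simp only [mul_zero, Real.exp_zero]
    rw [Finset.sum_const, Finset.card_univ, Fintype.card_fin, nsmul_eq_mul]
    ring
  set M := Real.log (4 * k) / wmn with hM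
  have h4k : (1:ℝ) < 4 * k := by
    have : (2:ℝ) ≤ (k:ℝ) := by exact_mod_cast hk
    nlinarith
  have hlogpos : 0 < Real.log (4 * k) := Real.log_pos h4k
  have hMpos : 0 < M := div_pos hlogpos hwmnpos
  have hgM : g M ≤ 1 / 4 := by
    have hterm : ∀ i : Fin k, 1 / (1 + Real.exp (w (FreeGroup.of i) * M)) ≤ 1 / (4 * k) := by
      intro i
      have h1 : Real.log (4 * k) ≤ w (FreeGroup.of i) * M := by
        rw [hM]
        rw [show w (FreeGroup.of i) * (Real.log (4*k) / wmn)
            = (w (FreeGroup.of i) / wmn) * Real.log (4*k) from by ring]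
        nlinarith [(one_le_div hwmnpos).2 (hwmnle i), hlogpos]
      have h2 : (4:ℝ) * k ≤ Real.exp (w (FreeGroup.of i) * M) := by
        calc (4:ℝ) * k = Real.exp (Real.log (4 * k)) := (Real.exp_log (by positivity)).symm
          _ ≤ _ := Real.exp_le_exp.2 h1
      rw [div_le_div_iff₀ (by positivity) (by positivity)]
      nlinarith
    calc g M ≤ ∑ _i : Fin k, 1 / (4 * (k:ℝ)) := Finset.sum_le_sum fun i _ => hterm i
      _ = 1 / 4 := by
        rw [Finset.sum_const, Finset.card_univ, Fintype.card_fin, nsmul_eq_mul]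
        field_simp
  have hIVT : (1:ℝ)/2 ∈ g '' Set.Icc 0 M := by
    apply intermediate_value_Icc' (le_of_lt hMpos) hcont.continuousOn
    constructor
    · exact hgM.trans (by norm_num)
    · rw [hg0]
      have : (2:ℝ) ≤ (k:ℝ) := by exact_mod_cast hk
      linarith
  obtain ⟨hs, hmem, hghs⟩ := hIVT
  refine ⟨hs, ?_, hghs⟩
  rcases lt_or_eq_of_le hmem.1 with hlt | heq
  · exact hlt
  · exfalso
    rw [← heq, hg0] at hghs
    have : (2:ℝ) ≤ (k:ℝ) := by exact_mod_cast hk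
    linarith

lemma aux_tendsto (a b : ℝ) (ha : 0 < a) :
    Tendsto (fun x : ℝ => Real.log (a * x + b) / x) atTop (nhds 0) := by
  have h1 : Tendsto (fun x : ℝ => a * x + b) atTop atTop :=
    tendsto_atTop_add_const_right _ b (Tendsto.const_mul_atTop ha tendsto_id)
  have h2 : (fun x : ℝ => Real.log (a * x + b)) =o[atTop] (fun x => a * x + b) :=
    Real.isLittleO_log_id_atTop.comp_tendsto h1
  have h3 : (fun x : ℝ => a * x + b) =O[atTop] (fun x : ℝ => x) := by
    rw [Asymptotics.isBigO_iff]
    refine ⟨a + |b|, Filter.eventually_atTop.2 ⟨1, fun x hx => ?_⟩⟩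
    have hx0 : (0:ℝ) < x := lt_of_lt_of_le one_pos hx
    rw [Real.norm_eq_abs, Real.norm_eq_abs, abs_of_pos hx0]
    calc |a * x + b| ≤ |a * x| + |b| := abs_add_le _ _
      _ = a * x + |b| := by rw [abs_of_pos (by positivity)]
      _ ≤ a * x + |b| * x := by nlinarith [abs_nonneg b]
      _ = (a + |b|) * x := by ring
  exact (h2.trans_isBigO h3).tendsto_div_nhds_zero

end Stmt4Aux

theorem stmt4 (k : ℕ) (hk : 2 ≤ k) (w : FreeGroup (Fin k) → ℝ)
    (hwpos : ∀ s ∈ stdGens k, 0 < w s)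
    (hwsym : ∀ i : Fin k, w (FreeGroup.of i)⁻¹ = w (FreeGroup.of i))
    (h : ℝ)
    (hent : Filter.Tendsto
      (fun R : ℝ => Real.log (((ballW (stdGens k) w R).ncard : ℝ)) / R)
      Filter.atTop (nhds h)) :
    ∑ i : Fin k, 1 / (1 + Real.exp (w (FreeGroup.of i) * h)) = 1 / 2 := by
  classical
  open Stmt4Aux Filter in
  have hk0 : 0 < k := by omega
  have hwt : ∀ t : Fin k × Bool, 0 < wt w t := wt_pos w hwpos
  have hne : (Finset.univ : Finset (Fin k × Bool)).Nonempty :=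
    ⟨⟨⟨0, hk0⟩, true⟩, Finset.mem_univ _⟩
  set wmn := Finset.univ.inf' hne (wt w) with hwmndef
  set wmx := Finset.univ.sup' hne (wt w) with hwmxdef
  have hwmn : 0 < wmn := by
    rw [hwmndef, Finset.lt_inf'_iff]; exact fun t _ => hwt t
  have hmn : ∀ t, wmn ≤ wt w t := fun t => Finset.inf'_le _ (Finset.mem_univ t)
  have hmx : ∀ t, wt w t ≤ wmx := fun t => Finset.le_sup' _ (Finset.mem_univ t)
  have hwmx : 0 < wmx := lt_of_lt_of_le hwmn (le_trans (hmn ⟨⟨0, hk0⟩, true⟩)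
    (hmx ⟨⟨0, hk0⟩, true⟩))
  obtain ⟨hs, hhs, hroot⟩ := exists_root k hk w hwpos
  have hroot' : ∑ t : Fin k × Bool, xx w hs t = 1 := by
    rw [Fintype.sum_prod_type]
    have hterm : ∀ i : Fin k, ∑ b : Bool, xx w hs (i, b)
        = 2 * (1 / (1 + Real.exp (w (FreeGroup.of i) * hs))) := by
      intro i
      rw [Fintype.sum_bool]
      show 1 / (1 + Real.exp (wt w ((i : Fin k), true) * hs))
          + 1 / (1 + Real.exp (wt w ((i : Fin k), false) * hs)) = _
      rw [wt, wt]
      ring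
    rw [Finset.sum_congr rfl (fun i _ => hterm i), ← Finset.mul_sum, hroot]
    norm_num
  have hcard : ∀ R : ℝ, (ballW (stdGens k) w R).ncard = (BF w wmn R).card :=
    fun R => ball_ncard w hwpos hwsym hwmn hmn R
  -- upper bound : h ≤ hs
  have hle : h ≤ hs := by
    refine le_of_tendsto_of_tendsto hent
      (show Tendsto (fun R : ℝ => Real.log ((2 / wmn) * R + 2) / R + hs) atTop (nhds hs) from by
        simpa using (aux_tendsto (2 / wmn) 2 (by positivity)).add
          (tendsto_const_nhds : Tendsto (fun _ : ℝ => hs) atTop (nhds hs))) ?_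
    filter_upwards [eventually_ge_atTop (1:ℝ)] with R hR
    have hR0 : (0:ℝ) < R := lt_of_lt_of_le one_pos hR
    have hcpos : (0:ℝ) < (BF w wmn R).card := by
      exact_mod_cast BF_card_pos w hwmn hmn (le_of_lt hR0)
    have hub : ((BF w wmn R).card : ℝ) ≤ ((2 / wmn) * R + 2) * Real.exp (hs * R) := by
      refine le_trans (BF_card_le w hs hwt hhs hroot' hwmn (le_of_lt hR0)) ?_
      have hfl : (⌊R / wmn⌋₊ : ℝ) ≤ R / wmn := Nat.floor_le (by positivity)
      calc ((⌊R / wmn⌋₊ : ℝ) + 1) * (2 * Real.exp (hs * R))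
          ≤ (R / wmn + 1) * (2 * Real.exp (hs * R)) := by
            have h5 : (⌊R / wmn⌋₊ : ℝ) + 1 ≤ R / wmn + 1 := by linarith
            exact mul_le_mul_of_nonneg_right h5 (by positivity)
        _ = ((2 / wmn) * R + 2) * Real.exp (hs * R) := by ring
    have hlog : Real.log ((ballW (stdGens k) w R).ncard : ℝ)
        ≤ Real.log ((2 / wmn) * R + 2) + hs * R := by
      rw [hcard R]
      calc Real.log ((BF w wmn R).card : ℝ)
          ≤ Real.log (((2 / wmn) * R + 2) * Real.exp (hs * R)) := by
            gcongr
        _ = Real.log ((2 / wmn) * R + 2) + hs * R := by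
            rw [Real.log_mul (by positivity) (by positivity), Real.log_exp]
    rw [div_le_iff₀ hR0]
    calc Real.log ((ballW (stdGens k) w R).ncard : ℝ)
        ≤ Real.log ((2 / wmn) * R + 2) + hs * R := hlog
      _ = (Real.log ((2 / wmn) * R + 2) / R + hs) * R := by field_simp
  -- lower bound : hs ≤ h
  have hge : hs ≤ h := by
    choose jf hj1 hj2 hj3 using fun n => BF_lower w hs hk0 hwt hhs hroot' hwmn hmn hmx n
    set Rf : ℕ → ℝ := fun n => ((jf n : ℤ) : ℝ) with hRf
    have hRlb : ∀ n : ℕ, ((n:ℝ) + 1) * wmn ≤ Rf n := hj1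
    have hRpos : ∀ n, 0 < Rf n := fun n => lt_of_lt_of_le (by positivity) (hj1 n)
    have hlin : Tendsto (fun n : ℕ => ((n:ℝ) + 1) * wmn) atTop atTop :=
      Tendsto.atTop_mul_const hwmn
        (tendsto_atTop_add_const_right _ 1 tendsto_natCast_atTop_atTop)
    have hRtop : Tendsto Rf atTop atTop := tendsto_atTop_mono hRlb hlin
    have hFR : Tendsto (fun n : ℕ =>
        Real.log (((ballW (stdGens k) w (Rf n)).ncard : ℝ)) / (Rf n)) atTop (nhds h) :=
      hent.comp hRtop
    set b : ℕ → ℝ := fun n =>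
      hs - hs / Rf n - Real.log (((n:ℝ) + 1) * wmx + 1) / Rf n with hb
    have hbF : ∀ n, b n ≤ Real.log (((ballW (stdGens k) w (Rf n)).ncard : ℝ)) / (Rf n) := by
      intro n
      have hden : (0:ℝ) < ((n:ℝ) + 1) * wmx + 1 := by positivity
      have hlb := hj3 n
      have hloglb : hs * (Rf n - 1) - Real.log (((n:ℝ) + 1) * wmx + 1)
          ≤ Real.log (((ballW (stdGens k) w (Rf n)).ncard : ℝ)) := by
        rw [hcard (Rf n)]
        calc hs * (Rf n - 1) - Real.log (((n:ℝ) + 1) * wmx + 1)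
            = Real.log (Real.exp (hs * (Rf n - 1)) / (((n:ℝ) + 1) * wmx + 1)) := by
              rw [Real.log_div (by positivity) (ne_of_gt hden), Real.log_exp]
          _ ≤ _ := by
              gcongr
      have hRn := hRpos n
      show hs - hs / Rf n - Real.log (((n:ℝ) + 1) * wmx + 1) / Rf n ≤ _
      rw [show hs - hs / Rf n - Real.log (((n:ℝ) + 1) * wmx + 1) / Rf n
          = (hs * (Rf n - 1) - Real.log (((n:ℝ) + 1) * wmx + 1)) / Rf n from by
            field_simp]
      gcongr
    have hb_tendsto : Tendsto b atTop (nhds hs) := by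
      have t1 : Tendsto (fun n : ℕ => hs / Rf n) atTop (nhds 0) :=
        Tendsto.div_atTop tendsto_const_nhds hRtop
      have t2 : Tendsto (fun n : ℕ => Real.log (((n:ℝ) + 1) * wmx + 1) / Rf n)
          atTop (nhds 0) := by
        have hgseq : Tendsto (fun n : ℕ =>
            Real.log (wmx * ((n:ℝ) + 1) + 1) / ((n:ℝ) + 1) * (1 / wmn)) atTop (nhds 0) := by
          have hcomp : Tendsto (fun n : ℕ => Real.log (wmx * ((n:ℝ) + 1) + 1) / ((n:ℝ) + 1))
              atTop (nhds 0) :=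
            (aux_tendsto wmx 1 hwmx).comp
              (tendsto_atTop_add_const_right _ 1 tendsto_natCast_atTop_atTop)
          simpa using hcomp.mul_const (1 / wmn)
        apply squeeze_zero (g := fun n : ℕ =>
            Real.log (wmx * ((n:ℝ) + 1) + 1) / ((n:ℝ) + 1) * (1 / wmn)) ?_ ?_ hgseq
        · intro n
          have h1 : (1:ℝ) ≤ ((n:ℝ) + 1) * wmx + 1 := by nlinarith [hwmx]
          exact div_nonneg (Real.log_nonneg h1) (le_of_lt (hRpos n))
        · intro n
          show Real.log (((n:ℝ) + 1) * wmx + 1) / Rf n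
              ≤ Real.log (wmx * ((n:ℝ) + 1) + 1) / ((n:ℝ) + 1) * (1 / wmn)
          rw [show Real.log (wmx * ((n:ℝ) + 1) + 1) / ((n:ℝ) + 1) * (1 / wmn)
              = Real.log (((n:ℝ) + 1) * wmx + 1) / (((n:ℝ) + 1) * wmn) from by
                rw [mul_comm wmx ((n:ℝ)+1)]; field_simp]
          have h1 : (1:ℝ) ≤ ((n:ℝ) + 1) * wmx + 1 := by nlinarith [hwmx]
          exact div_le_div_of_nonneg_left (Real.log_nonneg h1) (by positivity) (hRlb n)
      have hcomb : Tendsto (fun n : ℕ =>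
          hs - hs / Rf n - Real.log (((n:ℝ) + 1) * wmx + 1) / Rf n) atTop (nhds (hs - 0 - 0)) :=
        (Tendsto.sub (tendsto_const_nhds (x := hs)) t1).sub t2
      rw [hb]
      simpa using hcomb
    exact le_of_tendsto_of_tendsto' hb_tendsto hFR hbF
  have heq : h = hs := le_antisymm hle hge
  rw [heq]
  exact hroot
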